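/- For every integer n ≥ 1 and reals 0 < m < M, and for every finite set S of deterministic online search strategies with |S| ≤ n − 1, there exists a price sequence σ of length n with all prices in [m, M] such that every strategy A ∈ S satisfies profit(A, σ) < max_i σ i. (Hence any online algorithm with advice needs at least log₂ n advice bits to be optimal for online search, even knowing n.) -/

import Mathlib

/-- The maximum price of a price sequence of positive length. -/
noncomputable def maxPrice {n : ℕ} (hn : 0 < n) (σ : Fin n → ℝ) : ℝ :=
  Finset.univ.sup' ⟨⟨0, hn⟩, Finset.mem_univ _⟩ σ

/-- The profit of a deterministic online search strategy `A : List ℝ → Bool`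
on the price sequence `σ`: it accepts at the least index `k` such that `A`
applied to the prefix `[σ 0, …, σ k]` is `true`, obtaining `σ k`; if no such
index exists it must accept the last price `σ (n-1)`. -/
noncomputable def osProfit {n : ℕ} (hn : 0 < n) (A : List ℝ → Bool) (σ : Fin n → ℝ) : ℝ :=
  if h : ∃ k : Fin n, A ((List.ofFn σ).take ((k : ℕ) + 1)) = true then
    σ ((Finset.univ.filter (fun k : Fin n => A ((List.ofFn σ).take ((k : ℕ) + 1)) = true)).min'
      (h.imp fun k hk => Finset.mem_filter.mpr ⟨Finset.mem_univ _, hk⟩))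
  else σ ⟨n - 1, Nat.sub_lt hn one_pos⟩

lemma take_ofFn_eq {n : ℕ} (σ τ : Fin n → ℝ) (i : ℕ)
    (h : ∀ k : Fin n, (k:ℕ) < i → σ k = τ k) :
    (List.ofFn σ).take i = (List.ofFn τ).take i := by
  apply List.ext_getElem
  · simp
  · intro k h1 h2
    have hk : k < i ∧ k < n := by
      rw [List.length_take, List.length_ofFn] at h1
      omega
    simp only [List.getElem_take, List.getElem_ofFn]
    exact h ⟨k, hk.2⟩ hk.1


/-- For every `n ≥ 1`, reals `0 < m < M`, and every finite set `S`
of deterministic online search strategies with `|S| ≤ n - 1`, there is a price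
sequence `σ` of length `n` with all prices in `[m, M]` such that every strategy
`A ∈ S` obtains a profit strictly smaller than the optimal profit `max_i σ i`. -/
theorem advice_lower_bound_for_optimality
    (n : ℕ) (hn : 0 < n) (m M : ℝ) (hm : 0 < m) (hmM : m < M)
    (S : Finset (List ℝ → Bool)) (hS : S.card ≤ n - 1) :
    ∃ σ : Fin n → ℝ, (∀ i, m ≤ σ i ∧ σ i ≤ M) ∧
      ∀ A ∈ S, osProfit hn A σ < maxPrice hn σ := by
  classical
  set Δ : ℝ := (M - m) / n with hΔdef
  have hΔ : 0 < Δ := div_pos (sub_pos.mpr hmM) (by positivity)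
  set v : ℕ → ℝ := fun i => m + (i + 1) * Δ with hv
  have hvmono : ∀ i k : ℕ, i < k → v i < v k := by
    intro i k hik
    simp only [hv]
    have : (i + 1 : ℝ) < (k + 1 : ℝ) := by exact_mod_cast by omega
    nlinarith
  have hvm : ∀ i : ℕ, m < v i := by
    intro i
    simp only [hv]
    nlinarith [hΔ, (by positivity : (0:ℝ) ≤ (i:ℝ))]
  have hvM : ∀ i : ℕ, i < n → v i ≤ M := by
    intro i hi
    simp only [hv, hΔdef]
    have h1 : ((i:ℝ) + 1) ≤ (n : ℝ) := by exact_mod_cast hi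
    have hn' : (0:ℝ) < n := by exact_mod_cast hn
    rw [div_eq_mul_inv]
    have h2 : (n:ℝ) * (n:ℝ)⁻¹ = 1 := mul_inv_cancel₀ (ne_of_gt hn')
    nlinarith [mul_le_mul_of_nonneg_right h1 (le_of_lt (mul_pos (sub_pos.mpr hmM) (inv_pos.mpr hn')))]
  set inc : Fin n → ℝ := fun i => v i with hinc
  set T : (List ℝ → Bool) → Fin n := fun A =>
    if h : ∃ k : Fin n, A ((List.ofFn inc).take ((k : ℕ) + 1)) = true then
      (Finset.univ.filter (fun k : Fin n => A ((List.ofFn inc).take ((k : ℕ) + 1)) = true)).min'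
        (h.imp fun k hk => Finset.mem_filter.mpr ⟨Finset.mem_univ _, hk⟩)
    else ⟨n - 1, Nat.sub_lt hn one_pos⟩ with hTdef
  -- find a peak day j avoided by all acceptance times
  obtain ⟨j, hj⟩ : ∃ j : Fin n, ∀ A ∈ S, T A ≠ j := by
    by_contra hcon
    push_neg at hcon
    have hsub : (Finset.univ : Finset (Fin n)) ⊆ S.image T := by
      intro j _
      obtain ⟨A, hA, hAT⟩ := hcon j
      exact Finset.mem_image.mpr ⟨A, hA, hAT⟩
    have h1 : n ≤ (S.image T).card := by
      simpa using Finset.card_le_card hsub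
    have h2 : (S.image T).card ≤ S.card := Finset.card_image_le
    omega
  refine ⟨fun i => if (i : ℕ) ≤ (j : ℕ) then v i else m, ?_, ?_⟩
  · intro i
    by_cases hij : (i : ℕ) ≤ (j : ℕ)
    · simp only [hij, if_pos]
      exact ⟨le_of_lt (hvm i), hvM i i.isLt⟩
    · simp only [hij, if_neg, not_false_iff]
      exact ⟨le_refl m, le_of_lt hmM⟩
  · set σ : Fin n → ℝ := fun i => if (i : ℕ) ≤ (j : ℕ) then v i else m with hσ
    have hσj : σ j = v j := by simp [hσ]
    have hmax : maxPrice hn σ = v j := by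
      apply le_antisymm
      · apply Finset.sup'_le
        intro i _
        by_cases hij : (i : ℕ) ≤ (j : ℕ)
        · simp only [hσ, hij, if_pos]
          rcases eq_or_lt_of_le hij with h | h
          · rw [show (i:ℕ) = (j:ℕ) from h]
          · exact le_of_lt (hvmono _ _ h)
        · simp only [hσ, hij, if_neg, not_false_iff]
          exact le_of_lt (hvm j)
      · rw [← hσj]
        exact Finset.le_sup' σ (Finset.mem_univ j)
    rw [hmax]
    intro A hA
    -- prefixes of σ agree with inc up to day j
    have hpre : ∀ k : Fin n, (k : ℕ) ≤ (j : ℕ) →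
        (List.ofFn σ).take ((k : ℕ) + 1) = (List.ofFn inc).take ((k : ℕ) + 1) := by
      intro k hk
      apply take_ofFn_eq
      intro l hl
      simp only [hσ, hinc]
      rw [if_pos (by omega)]
    have hTj := hj A hA
    by_cases hQ : ∃ k : Fin n, A ((List.ofFn inc).take ((k : ℕ) + 1)) = true
    · -- t := first acceptance on increasing sequence
      set F := Finset.univ.filter (fun k : Fin n => A ((List.ofFn inc).take ((k : ℕ) + 1)) = true)
        with hF
      have hFne : F.Nonempty := hQ.imp fun k hk => Finset.mem_filter.mpr ⟨Finset.mem_univ _, hk⟩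
      set t : Fin n := F.min' hFne with ht
      have hTA : T A = t := by rw [hTdef]; simp only [dif_pos hQ]; rfl
      have htj : t ≠ j := by rw [← hTA]; exact hTj
      have htF : t ∈ F := Finset.min'_mem F hFne
      have htacc : A ((List.ofFn inc).take ((t : ℕ) + 1)) = true := (Finset.mem_filter.mp htF).2
      rcases lt_or_gt_of_ne (Fin.val_ne_of_ne htj) with hlt | hgt
      · -- t < j : A accepts at some index ≤ t < j on σ
        have hPt : A ((List.ofFn σ).take ((t : ℕ) + 1)) = true := by
          rw [hpre t (le_of_lt hlt)]; exact htacc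
        have hP : ∃ k : Fin n, A ((List.ofFn σ).take ((k : ℕ) + 1)) = true := ⟨t, hPt⟩
        rw [osProfit, dif_pos hP]
        set G := Finset.univ.filter (fun k : Fin n => A ((List.ofFn σ).take ((k : ℕ) + 1)) = true)
          with hG
        have hGne : G.Nonempty := hP.imp fun k hk => Finset.mem_filter.mpr ⟨Finset.mem_univ _, hk⟩
        have hk0 : G.min' hGne ≤ t := Finset.min'_le G t (Finset.mem_filter.mpr ⟨Finset.mem_univ _, hPt⟩)
        have hk0j : ((G.min' hGne : Fin n) : ℕ) < (j : ℕ) := lt_of_le_of_lt hk0 hlt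
        show σ (G.min' hGne) < v j
        rw [hσ]
        simp only [if_pos (le_of_lt hk0j)]
        exact hvmono _ _ hk0j
      · -- j < t : A rejects all prefixes up to day j
        have hrej : ∀ k : Fin n, (k : ℕ) ≤ (j : ℕ) →
            ¬ A ((List.ofFn σ).take ((k : ℕ) + 1)) = true := by
          intro k hk hacc
          rw [hpre k hk] at hacc
          have : t ≤ k := Finset.min'_le F k (Finset.mem_filter.mpr ⟨Finset.mem_univ _, hacc⟩)
          have : (t : ℕ) ≤ (k : ℕ) := this
          omega
        have hjn : (j : ℕ) < n - 1 := by
          have := t.isLt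
          omega
        rw [osProfit]
        by_cases hP : ∃ k : Fin n, A ((List.ofFn σ).take ((k : ℕ) + 1)) = true
        · rw [dif_pos hP]
          set G := Finset.univ.filter (fun k : Fin n => A ((List.ofFn σ).take ((k : ℕ) + 1)) = true)
            with hG
          have hGne : G.Nonempty := hP.imp fun k hk => Finset.mem_filter.mpr ⟨Finset.mem_univ _, hk⟩
          have hmem := Finset.min'_mem G hGne
          have hacc := (Finset.mem_filter.mp hmem).2
          have hgt' : (j : ℕ) < ((G.min' hGne : Fin n) : ℕ) := by
            by_contra hle
            exact hrej _ (by omega) hacc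
          show σ (G.min' hGne) < v j
          rw [hσ]
          simp only [if_neg (by omega : ¬ ((G.min' hGne : Fin n) : ℕ) ≤ (j : ℕ))]
          exact hvm j
        · rw [dif_neg hP]
          show σ ⟨n - 1, _⟩ < v j
          rw [hσ]
          simp only [if_neg (by omega : ¬ (n - 1 ≤ (j : ℕ)))]
          exact hvm j
    · -- A never accepts on the increasing sequence; T A = n-1 ≠ j
      have hTA : T A = ⟨n - 1, Nat.sub_lt hn one_pos⟩ := by rw [hTdef]; simp only [dif_neg hQ]
      have hjn : (j : ℕ) < n - 1 := by
        have h1 : (j : ℕ) ≠ n - 1 := by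
          intro h
          apply hTj
          rw [hTA]
          exact Fin.ext h.symm
        have := j.isLt
        omega
      have hrej : ∀ k : Fin n, (k : ℕ) ≤ (j : ℕ) →
          ¬ A ((List.ofFn σ).take ((k : ℕ) + 1)) = true := by
        intro k hk hacc
        rw [hpre k hk] at hacc
        exact hQ ⟨k, hacc⟩
      rw [osProfit]
      by_cases hP : ∃ k : Fin n, A ((List.ofFn σ).take ((k : ℕ) + 1)) = true
      · rw [dif_pos hP]
        set G := Finset.univ.filter (fun k : Fin n => A ((List.ofFn σ).take ((k : ℕ) + 1)) = true)
          with hG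
        have hGne : G.Nonempty := hP.imp fun k hk => Finset.mem_filter.mpr ⟨Finset.mem_univ _, hk⟩
        have hmem := Finset.min'_mem G hGne
        have hacc := (Finset.mem_filter.mp hmem).2
        have hgt' : (j : ℕ) < ((G.min' hGne : Fin n) : ℕ) := by
          by_contra hle
          exact hrej _ (by omega) hacc
        show σ (G.min' hGne) < v j
        rw [hσ]
        simp only [if_neg (by omega : ¬ ((G.min' hGne : Fin n) : ℕ) ≤ (j : ℕ))]
        exact hvm j
      · rw [dif_neg hP]
        show σ ⟨n - 1, _⟩ < v j
        rw [hσ]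
        simp only [if_neg (by omega : ¬ (n - 1 ≤ (j : ℕ)))]
        exact hvm j
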